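/- For every nonnegative integer n, ∑_{k=0}^{n} C(n,k)²·H_k = (2H_n − H_{2n})·C(2n,n). -/

import Mathlib

def harmonic' (n : ℕ) : ℚ := ∑ j ∈ Finset.Icc 1 n, (1 / j : ℚ)

lemma harmonic'_succ (k : ℕ) : harmonic' (k + 1) = harmonic' k + 1 / (k + 1) := by
  unfold harmonic'
  rw [Finset.sum_Icc_succ_top (by omega : 1 ≤ k + 1)]
  push_cast
  ring

def gq (n k : ℕ) : ℚ :=
  -((n : ℚ) + 1) * (3 * n + 3 - 2 * k) * (((n + 1).choose k : ℚ) - n.choose k) ^ 2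

lemma hrel (n k : ℕ) :
    (k : ℚ) * (n.choose k) = ((n : ℚ) + 1 - k) * (((n + 1).choose k : ℚ) - n.choose k) := by
  cases k with
  | zero => simp
  | succ j =>
    have hb : (((n + 1).choose (j + 1) : ℚ)) - n.choose (j + 1) = n.choose j := by
      rw [Nat.choose_succ_succ]
      push_cast
      ring
    rw [hb]
    by_cases hj : j ≤ n
    · have h := Nat.choose_succ_right_eq n j
      have hc : ((n.choose (j + 1) * (j + 1) : ℕ) : ℚ) = ((n.choose j * (n - j) : ℕ) : ℚ) := by
        rw [h]
      push_cast [Nat.cast_sub hj] at hc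
      push_cast
      linarith [hc]
    · have h1 : n.choose (j + 1) = 0 := Nat.choose_eq_zero_of_lt (by omega)
      have h2 : n.choose j = 0 := Nat.choose_eq_zero_of_lt (by omega)
      rw [h1, h2]
      simp

lemma claim1 (n k : ℕ) :
    ((n : ℚ) + 1) ^ 2 * ((n + 1).choose k : ℚ) ^ 2
      - (2 * n + 1) * (2 * n + 2) * ((n.choose k : ℚ)) ^ 2
      = gq n (k + 1) - gq n k := by
  have hb1 : (((n + 1).choose (k + 1) : ℚ)) - n.choose (k + 1) = n.choose k := by
    rw [Nat.choose_succ_succ]; push_cast; ring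
  unfold gq
  rw [hb1]
  have h := hrel n k
  set a : ℚ := (n.choose k : ℚ) with ha
  set b : ℚ := ((n + 1).choose k : ℚ) - a with hbdef
  have hab : ((n + 1).choose k : ℚ) = a + b := by rw [hbdef]; ring
  rw [hab]
  push_cast
  linear_combination (2 * ((n : ℚ) + 1) * (b - a)) * h

lemma V1 (n : ℕ) :
    ∑ k ∈ Finset.range (n + 1), (n + 1).choose (k + 1) * n.choose k
      = (2 * n + 1).choose (n + 1) := by
  have h := Nat.add_choose_eq (n + 1) n (n + 1)
  rw [Finset.Nat.sum_antidiagonal_eq_sum_range_succ_mk] at h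
  rw [Finset.sum_range_succ'] at h
  have h0 : (n + 1).choose 0 * n.choose (n + 1 - 0) = 0 := by
    simp [Nat.choose_eq_zero_of_lt]
  rw [h0, add_zero] at h
  have he : (2 * n + 1) = n + 1 + n := by omega
  rw [he, h]
  apply Finset.sum_congr rfl
  intro k hk
  simp only [Finset.mem_range] at hk
  have : n + 1 - (k + 1) = n - k := by omega
  rw [this, Nat.choose_symm (by omega)]

lemma V2 (n : ℕ) :
    ∑ k ∈ Finset.range (n + 1), k * ((n + 1).choose (k + 1) * n.choose k)
      = n * (2 * n).choose (n + 1) := by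
  cases n with
  | zero => simp
  | succ m =>
    rw [Finset.sum_range_succ']
    simp only [zero_mul, add_zero]
    have hstep : ∀ j, (j + 1) * ((m + 1 + 1).choose (j + 1 + 1) * (m + 1).choose (j + 1))
        = (m + 1) * ((m + 2).choose (j + 2) * m.choose j) := by
      intro j
      have h := Nat.add_one_mul_choose_eq m j
      calc (j + 1) * ((m + 1 + 1).choose (j + 1 + 1) * (m + 1).choose (j + 1))
          = ((m + 1).choose (j + 1) * (j + 1)) * (m + 2).choose (j + 2) := by ring
        _ = (Nat.succ m * m.choose j) * (m + 2).choose (j + 2) := by rw [h]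
        _ = (m + 1) * ((m + 2).choose (j + 2) * m.choose j) := by
            simp only [Nat.succ_eq_add_one]; ring
    rw [Finset.sum_congr rfl fun j _ => hstep j, ← Finset.mul_sum]
    congr 1
    have h := Nat.add_choose_eq (m + 2) m (m + 2)
    rw [Finset.Nat.sum_antidiagonal_eq_sum_range_succ_mk] at h
    rw [Finset.sum_range_succ', Finset.sum_range_succ'] at h
    have h0 : (m + 2).choose 0 * m.choose (m + 2 - 0) = 0 := by
      simp [Nat.choose_eq_zero_of_lt]
    have h1 : (m + 2).choose (0 + 1) * m.choose (m + 2 - (0 + 1)) = 0 := by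
      have : m.choose (m + 2 - 1) = 0 := Nat.choose_eq_zero_of_lt (by omega)
      simp [this]
    rw [h0, h1, add_zero, add_zero] at h
    have he : 2 * (m + 1) = m + 2 + m := by omega
    rw [he, h]
    apply Finset.sum_congr rfl
    intro j hj
    simp only [Finset.mem_range] at hj
    have : m + 2 - (j + 1 + 1) = m - j := by omega
    rw [this, Nat.choose_symm (by omega)]

lemma star (n : ℕ) :
    ∑ k ∈ Finset.range (n + 1),
        ((3 * n + 1 : ℚ) - 2 * k) * ((n + 1).choose (k + 1) : ℚ) * (n.choose k : ℚ)
      = (4 * n + 1) * ((2 * n).choose n : ℚ) := by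
  have hsplit : ∀ k : ℕ, ((3 * n + 1 : ℚ) - 2 * k) * ((n + 1).choose (k + 1) : ℚ) * (n.choose k : ℚ)
      = (3 * n + 1) * (((n + 1).choose (k + 1) : ℚ) * (n.choose k : ℚ))
        - 2 * ((k : ℚ) * (((n + 1).choose (k + 1) : ℚ) * (n.choose k : ℚ))) := by
    intro k; ring
  rw [Finset.sum_congr rfl fun k _ => hsplit k, Finset.sum_sub_distrib,
    ← Finset.mul_sum, ← Finset.mul_sum]
  have hv1 := congrArg (Nat.cast : ℕ → ℚ) (V1 n)
  push_cast at hv1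
  have hv2 := congrArg (Nat.cast : ℕ → ℚ) (V2 n)
  push_cast at hv2
  rw [hv1, hv2]
  have h1 := congrArg (Nat.cast : ℕ → ℚ) (Nat.add_one_mul_choose_eq (2 * n) n)
  push_cast at h1
  have h2n : 2 * n - n = n := by omega
  have h2 := congrArg (Nat.cast : ℕ → ℚ) (Nat.choose_succ_right_eq (2 * n) n)
  rw [h2n] at h2
  push_cast at h2
  have hne : ((n : ℚ) + 1) ≠ 0 := by positivity
  apply mul_left_cancel₀ hne
  linear_combination (-(3 * (n:ℚ) + 1)) * h1 + (-2 * (n:ℚ)) * h2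

lemma recur (n : ℕ) :
    ((n : ℚ) + 1) ^ 2 * (∑ k ∈ Finset.range (n + 1 + 1), ((n + 1).choose k : ℚ) ^ 2 * harmonic' k)
      - (2 * n + 1) * (2 * n + 2) * (∑ k ∈ Finset.range (n + 1), (n.choose k : ℚ) ^ 2 * harmonic' k)
      = (4 * n + 1) * ((2 * n).choose n : ℚ) := by
  have hext : ∑ k ∈ Finset.range (n + 1 + 1), (n.choose k : ℚ) ^ 2 * harmonic' k
      = ∑ k ∈ Finset.range (n + 1), (n.choose k : ℚ) ^ 2 * harmonic' k := by
    rw [Finset.sum_range_succ]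
    have : n.choose (n + 1) = 0 := Nat.choose_eq_zero_of_lt (by omega)
    simp [this]
  rw [← hext, Finset.mul_sum, Finset.mul_sum, ← Finset.sum_sub_distrib]
  have hcomb : ∀ k : ℕ,
      ((n : ℚ) + 1) ^ 2 * (((n + 1).choose k : ℚ) ^ 2 * harmonic' k)
        - (2 * n + 1) * (2 * n + 2) * ((n.choose k : ℚ) ^ 2 * harmonic' k)
      = (gq n (k + 1) * harmonic' (k + 1) - gq n k * harmonic' k)
        - gq n (k + 1) * (1 / (k + 1)) := by
    intro k
    have h1 := claim1 n k
    have h2 := harmonic'_succ k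
    calc ((n : ℚ) + 1) ^ 2 * (((n + 1).choose k : ℚ) ^ 2 * harmonic' k)
        - (2 * n + 1) * (2 * n + 2) * ((n.choose k : ℚ) ^ 2 * harmonic' k)
        = (((n : ℚ) + 1) ^ 2 * ((n + 1).choose k : ℚ) ^ 2
            - (2 * n + 1) * (2 * n + 2) * (n.choose k : ℚ) ^ 2) * harmonic' k := by ring
      _ = (gq n (k + 1) - gq n k) * harmonic' k := by rw [h1]
      _ = (gq n (k + 1) * harmonic' (k + 1) - gq n k * harmonic' k)
            - gq n (k + 1) * (1 / (k + 1)) := by rw [h2]; ring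
  rw [Finset.sum_congr rfl fun k _ => hcomb k, Finset.sum_sub_distrib]
  rw [Finset.sum_range_sub (fun k => gq n k * harmonic' k)]
  have hg0 : gq n 0 = 0 := by simp [gq]
  have hgtop : gq n (n + 1 + 1) = 0 := by
    have e1 : (n + 1).choose (n + 1 + 1) = 0 := Nat.choose_eq_zero_of_lt (by omega)
    have e2 : n.choose (n + 1 + 1) = 0 := Nat.choose_eq_zero_of_lt (by omega)
    simp [gq, e1, e2]
  rw [hg0, hgtop, zero_mul, zero_mul, sub_zero, zero_sub]
  have hgk : ∀ k : ℕ, gq n (k + 1) = -((n : ℚ) + 1) * (3 * n + 1 - 2 * k) * (n.choose k : ℚ) ^ 2 := by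
    intro k
    have hb1 : (((n + 1).choose (k + 1) : ℚ)) - n.choose (k + 1) = n.choose k := by
      rw [Nat.choose_succ_succ]; push_cast; ring
    unfold gq
    rw [hb1]
    push_cast
    ring
  have hterm : ∀ k : ℕ, -(gq n (k + 1) * (1 / (k + 1)))
      = ((3 * n + 1 : ℚ) - 2 * k) * ((n + 1).choose (k + 1) : ℚ) * (n.choose k : ℚ) := by
    intro k
    have hmc := congrArg (Nat.cast : ℕ → ℚ) (Nat.add_one_mul_choose_eq n k)
    push_cast at hmc
    rw [hgk k]
    have hkne : ((k : ℚ) + 1) ≠ 0 := by positivity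
    field_simp
    linear_combination ((3 * (n:ℚ) + 1 - 2 * k) * (n.choose k : ℚ)) * hmc
  rw [← Finset.sum_neg_distrib, Finset.sum_congr rfl fun k _ => hterm k]
  rw [Finset.sum_range_succ]
  have hz : n.choose (n + 1) = 0 := Nat.choose_eq_zero_of_lt (by omega)
  rw [hz]
  push_cast
  rw [mul_zero, add_zero]
  exact star n

theorem stmt_10 (n : ℕ) :
    ∑ k ∈ Finset.range (n + 1), ((Nat.choose n k : ℚ)) ^ 2 * harmonic' k
      = (2 * harmonic' n - harmonic' (2 * n)) * (Nat.choose (2 * n) n) := by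
  induction n with
  | zero => simp [harmonic']
  | succ n ih =>
    have hr := recur n
    rw [ih] at hr
    have hne : ((n : ℚ) + 1) ≠ 0 := by positivity
    have hne2 : ((n : ℚ) + 1) ^ 2 ≠ 0 := pow_ne_zero _ hne
    have hc : ((n : ℚ) + 1) * ((2 * (n + 1)).choose (n + 1) : ℚ)
        = 2 * (2 * n + 1) * ((2 * n).choose n : ℚ) := by
      exact_mod_cast congrArg (Nat.cast : ℕ → ℚ) (Nat.succ_mul_centralBinom_succ n)
    have hH1 : ((n : ℚ) + 1) * harmonic' (n + 1) = ((n : ℚ) + 1) * harmonic' n + 1 := by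
      rw [harmonic'_succ, mul_add, mul_one_div, div_self hne]
    have hH2 : harmonic' (2 * (n + 1))
        = harmonic' (2 * n) + 1 / (2 * (n : ℚ) + 1) + 1 / (2 * (n : ℚ) + 2) := by
      have e : 2 * (n + 1) = 2 * n + 1 + 1 := by ring
      rw [e, harmonic'_succ, harmonic'_succ]
      push_cast
      ring
    have e1 : (2 * (n : ℚ) + 1) ≠ 0 := by positivity
    have e2 : (2 * (n : ℚ) + 2) ≠ 0 := by positivity
    have hH2' : (2 * (n : ℚ) + 1) * (2 * (n : ℚ) + 2) * harmonic' (2 * (n + 1))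
        = (2 * (n : ℚ) + 1) * (2 * (n : ℚ) + 2) * harmonic' (2 * n)
          + (2 * (n : ℚ) + 2) + (2 * (n : ℚ) + 1) := by
      rw [hH2]
      field_simp
    apply mul_left_cancel₀ hne2
    linear_combination hr
      + (-((n : ℚ) + 1) * (2 * harmonic' (n + 1) - harmonic' (2 * (n + 1)))) * hc
      + (-4 * (2 * (n : ℚ) + 1) * ((2 * n).choose n : ℚ)) * hH1
      + ((2 * n).choose n : ℚ) * hH2'
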